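/- Let p be prime and let F(t) ∈ \bar{F}_p((t^ℚ)) be a generalized Laurent series. Then F can be written uniquely as F = F₋ + c + F₊ where c ∈ \bar{F}_p is a constant, F₊ has support contained in ℚ_{>0}, and F₋ has support contained in ℚ_{<0}. Moreover, given such a decomposition, every solution G in \bar{F}_p((t^ℚ)) of the equation G^p − G = −F has the form G = G₊ + G₋ + a + i, where i ∈ F_p, a ∈ \bar{F}_p satisfies a^p − a = −c, G₊ = F₊(t) + F₊(t)^p + F₊(t)^{p^2} + ⋯ (a convergent sum in the positive-support part), and G₋ = −F₋(t)^{1/p} − F₋(t)^{1/p^2} − ⋯. -/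

import Mathlib

set_option linter.unusedSectionVars false

open HahnSeries

namespace Stmt18

open scoped Classical

variable {K : Type*} [Field K] {p : ℕ} [Fact p.Prime] [CharP K p] [PerfectRing K p]

noncomputable section

instance : CharP (HahnSeries ℚ K) p := charP_of_injective_ringHom HahnSeries.C_injective p

variable (p) in
lemma p_pos : 0 < p := (Fact.out : p.Prime).pos

variable (p) in
lemma p_cast_pos : (0:ℚ) < p := by exact_mod_cast p_pos p

/-- truncation of a Hahn series to a set of exponents -/
def cut (x : HahnSeries ℚ K) (s : Set ℚ) : HahnSeries ℚ K where
  coeff a := if a ∈ s then x.coeff a else 0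
  isPWO_support' := x.isPWO_support.mono (by
    intro a ha
    simp only [Function.mem_support] at ha
    by_cases h : a ∈ s
    · simp only [h, if_true] at ha; exact ha
    · simp [h] at ha)

@[simp] lemma cut_coeff (x : HahnSeries ℚ K) (s : Set ℚ) (a : ℚ) :
    (cut x s).coeff a = if a ∈ s then x.coeff a else 0 := rfl

lemma mem_support_pow {x : HahnSeries ℚ K} {n : ℕ} {γ : ℚ} (hγ : γ ∈ (x ^ n).support) :
    ∃ f : Fin n → ℚ, (∀ i, f i ∈ x.support) ∧ ∑ i, f i = γ := by
  induction n generalizing γ with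
  | zero =>
    refine ⟨Fin.elim0, fun i => i.elim0, ?_⟩
    rw [pow_zero] at hγ
    have := support_single_subset (a := (0:ℚ)) (r := (1:K)) hγ
    simp at this ⊢
    exact this.symm
  | succ n ih =>
    rw [pow_succ] at hγ
    obtain ⟨i, hi, j, hj, rfl⟩ := support_mul_subset hγ
    obtain ⟨f, hf, hsum⟩ := ih hi
    refine ⟨Fin.snoc f j, fun k => ?_, ?_⟩
    · refine Fin.lastCases ?_ ?_ k
      · simpa using hj
      · intro k; simpa using hf k
    · rw [Fin.sum_univ_castSucc]
      simp [hsum]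

lemma coeff_pow_p (x : HahnSeries ℚ K) (β : ℚ) :
    (x ^ p).coeff β = (x.coeff (β / p)) ^ p := by
  have hp : (0:ℚ) < p := p_cast_pos p
  set δ := β / p with hδ
  have hβ : (p : ℚ) * δ = β := mul_div_cancel₀ β hp.ne'
  set y := cut x {a | a < δ} with hy
  set z := cut x {a | δ < a} with hz
  have hx : x = y + single δ (x.coeff δ) + z := by
    ext a
    rw [coeff_add, coeff_add, hy, hz]
    simp only [cut_coeff, Set.mem_setOf_eq, coeff_single]
    rcases lt_trichotomy a δ with h | h | h
    · simp [h, h.ne, not_lt.2 h.le]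
    · subst h; simp
    · simp [h, h.ne', not_lt.2 h.le]
  have key : ∀ (w : HahnSeries ℚ K), (∀ a ∈ w.support, a ≠ δ ∧ (a < δ ∨ δ < a) → True) → True :=
    fun _ _ => trivial
  have hyc : (y ^ p).coeff β = 0 := by
    by_contra h
    obtain ⟨f, hf, hsum⟩ := mem_support_pow (Function.mem_support.2 h)
    have hlt : ∀ i : Fin p, f i < δ := by
      intro i
      have := hf i
      simp only [hy, mem_support, cut_coeff, Set.mem_setOf_eq, ne_eq] at this
      by_contra hc
      simp [hc] at this
    have : ∑ i : Fin p, f i < ∑ _i : Fin p, δ := by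
      refine Finset.sum_lt_sum_of_nonempty ?_ fun i _ => hlt i
      haveI : Nonempty (Fin p) := ⟨⟨0, p_pos p⟩⟩
      exact Finset.univ_nonempty
    rw [hsum, Finset.sum_const, Finset.card_univ, Fintype.card_fin, nsmul_eq_mul, hβ] at this
    exact lt_irrefl _ this
  have hzc : (z ^ p).coeff β = 0 := by
    by_contra h
    obtain ⟨f, hf, hsum⟩ := mem_support_pow (Function.mem_support.2 h)
    have hlt : ∀ i : Fin p, δ < f i := by
      intro i
      have := hf i
      simp only [hz, mem_support, cut_coeff, Set.mem_setOf_eq, ne_eq] at this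
      by_contra hc
      simp [hc] at this
    have : ∑ _i : Fin p, δ < ∑ i : Fin p, f i := by
      refine Finset.sum_lt_sum_of_nonempty ?_ fun i _ => hlt i
      haveI : Nonempty (Fin p) := ⟨⟨0, p_pos p⟩⟩
      exact Finset.univ_nonempty
    rw [hsum, Finset.sum_const, Finset.card_univ, Fintype.card_fin, nsmul_eq_mul, hβ] at this
    exact lt_irrefl _ this
  have hxp : x ^ p = y ^ p + single δ (x.coeff δ) ^ p + z ^ p := by
    conv_lhs => rw [hx]
    rw [add_pow_char, add_pow_char]
  rw [hxp]
  simp only [coeff_add, single_pow]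
  rw [hyc, hzc, show (p • δ) = β by rw [nsmul_eq_mul, hβ]]
  simp


variable (p) in
/-- p-th root of a Hahn series -/
def root (x : HahnSeries ℚ K) : HahnSeries ℚ K where
  coeff a := (frobeniusEquiv K p).symm (x.coeff (p * a))
  isPWO_support' := by
    refine (x.isPWO_support.image_of_monotone (f := fun a => a / p) ?_).mono ?_
    · intro a b h
      exact div_le_div_of_nonneg_right h (p_cast_pos p).le
    · intro a ha
      simp only [Function.mem_support] at ha
      have h1 : x.coeff (p * a) ≠ 0 := fun h => ha (by rw [h, map_zero])
      exact ⟨p * a, h1, mul_div_cancel_left₀ a (p_cast_pos p).ne'⟩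

lemma root_coeff (x : HahnSeries ℚ K) (a : ℚ) :
    (root p x).coeff a = (frobeniusEquiv K p).symm (x.coeff (p * a)) := rfl

lemma root_pow (x : HahnSeries ℚ K) : (root p x) ^ p = x := by
  ext β
  rw [coeff_pow_p, root_coeff, mul_div_cancel₀ β (p_cast_pos p).ne']
  exact frobenius_apply_frobeniusEquiv_symm K p (x.coeff β)

lemma mem_support_root {x : HahnSeries ℚ K} {a : ℚ} (ha : a ∈ (root p x).support) :
    p * a ∈ x.support := by
  simp only [mem_support, root_coeff, ne_eq] at ha ⊢
  exact fun h => ha (by rw [h, map_zero])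

/-- well-foundedness of countable unions with escaping lower bounds -/
lemma isWF_iUnion_aux {S : ℕ → Set ℚ} (h1 : ∀ j, (S j).IsWF)
    (h2 : ∀ x, (∃ j, x ∈ S j) → {j | ∃ q ∈ S j, q ≤ x}.Finite) :
    (⋃ j, S j).IsWF := by
  rw [Set.isWF_iff_no_descending_seq]
  intro f hf hmem
  obtain ⟨j0, hj0⟩ := Set.mem_iUnion.1 (hmem 0)
  have hfin := h2 (f 0) ⟨j0, hj0⟩
  have hsub : Set.range f ⊆ ⋃ j ∈ hfin.toFinset, S j := by
    rintro _ ⟨n, rfl⟩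
    obtain ⟨j, hj⟩ := Set.mem_iUnion.1 (hmem n)
    have hn : f n ≤ f 0 := hf.antitone (Nat.zero_le n)
    refine Set.mem_biUnion ?_ hj
    exact hfin.mem_toFinset.2 ⟨f n, hj, hn⟩
  have hWF : (⋃ j ∈ hfin.toFinset, S j).IsWF := by
    classical
    refine Finset.induction_on hfin.toFinset ?_ ?_
    · simp
    · intro a s _ hind
      rw [Finset.set_biUnion_insert]
      exact (h1 a).union hind
  rw [Set.isWF_iff_no_descending_seq] at hWF
  exact hWF f hf (fun n => hsub ⟨n, rfl⟩)

lemma cast_lt_pow {q : ℕ} (hq : 2 ≤ q) (j : ℕ) : (j : ℚ) < (q : ℚ) ^ j := by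
  calc (j : ℚ) < 2 ^ j := by exact_mod_cast j.lt_two_pow_self
  _ ≤ (q : ℚ) ^ j := by
      apply pow_le_pow_left₀ (by norm_num)
      exact_mod_cast hq


lemma finite_cast_lt (B : ℚ) : {j : ℕ | (j : ℚ) < B}.Finite := by
  apply (Set.finite_Iio (⌈B⌉₊)).subset
  intro j hj
  simp only [Set.mem_setOf_eq] at hj
  have : (j : ℚ) < (⌈B⌉₊ : ℚ) := lt_of_lt_of_le hj (Nat.le_ceil B)
  exact_mod_cast this

lemma finsum_succ {M : Type*} [AddCommMonoid M] (u : ℕ → M)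
    (h : (Function.support u).Finite) : u 0 + ∑ᶠ j, u (j + 1) = ∑ᶠ j, u j := by
  classical
  set N := h.toFinset.sup id + 1 with hN
  have hsub : Function.support u ⊆ ↑(Finset.range (N + 1)) := by
    intro j hj
    simp only [Finset.coe_range, Set.mem_Iio]
    have : j ≤ h.toFinset.sup id := Finset.le_sup (f := id) (h.mem_toFinset.2 hj)
    omega
  have hsub2 : Function.support (fun j => u (j + 1)) ⊆ ↑(Finset.range N) := by
    intro j hj
    simp only [Finset.coe_range, Set.mem_Iio]
    have h1 : (j+1) ∈ Function.support u := hj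
    have : j + 1 ≤ h.toFinset.sup id := Finset.le_sup (f := id) (h.mem_toFinset.2 h1)
    omega
  rw [finsum_eq_sum_of_support_subset u hsub,
    finsum_eq_sum_of_support_subset _ hsub2, Finset.sum_range_succ' u N]
  rw [add_comm]

lemma exists_Gp (Fp : HahnSeries ℚ K) (hFp : ∀ α ∈ Fp.support, 0 < α) :
    ∃ Gp : HahnSeries ℚ K, (∀ α ∈ Gp.support, 0 < α) ∧ Gp ^ p - Gp = -Fp := by
  by_cases h0 : Fp = 0
  · exact ⟨0, by simp, by rw [h0]; simp [zero_pow (p_pos p).ne']⟩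
  have hne : Fp.support.Nonempty := support_nonempty_iff.2 h0
  set m := Fp.isWF_support.min hne with hm
  have hm0 : 0 < m := hFp _ (Fp.isWF_support.min_mem hne)
  have hle : ∀ a ∈ Fp.support, m ≤ a := fun a ha => Fp.isWF_support.min_le hne ha
  have hsupp : ∀ j : ℕ, ∀ γ ∈ (Fp ^ (p ^ j)).support, ((p:ℚ) ^ j) * m ≤ γ := by
    intro j γ hγ
    obtain ⟨f, hf, rfl⟩ := mem_support_pow hγ
    calc ((p:ℚ) ^ j) * m = ∑ _i : Fin (p ^ j), m := by
          rw [Finset.sum_const, Finset.card_univ, Fintype.card_fin, nsmul_eq_mul]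
          push_cast; ring
      _ ≤ ∑ i, f i := Finset.sum_le_sum fun i _ => hle _ (hf i)
  have hco : ∀ x : ℚ, {j : ℕ | ∃ q ∈ (Fp ^ (p ^ j)).support, q ≤ x}.Finite := by
    intro x
    apply (finite_cast_lt (x / m)).subset
    intro j hj
    obtain ⟨q, hq, hqx⟩ := hj
    have h1 : ((p:ℚ) ^ j) * m ≤ x := le_trans (hsupp j q hq) hqx
    have h2 : ((p:ℚ) ^ j) ≤ x / m := (le_div_iff₀ hm0).2 h1
    have h3 : (j : ℚ) < (p:ℚ) ^ j := by
      exact_mod_cast cast_lt_pow (Fact.out : p.Prime).two_le j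
    exact lt_of_lt_of_le h3 h2
  set s : HahnSeries.SummableFamily ℚ K ℕ :=
    { toFun := fun j => Fp ^ (p ^ j)
      isPWO_iUnion_support' := by
        rw [Set.isPWO_iff_isWF]
        exact isWF_iUnion_aux (fun j => (Fp ^ (p ^ j)).isPWO_support.isWF)
          (fun x _ => hco x)
      finite_co_support' := fun g =>
        (hco g).subset (fun j hj => ⟨g, hj, le_refl g⟩) } with hs
  have hs_apply : ∀ j, s j = Fp ^ (p ^ j) := fun j => rfl
  have hGpsupp : ∀ α ∈ s.hsum.support, 0 < α := by
    intro α hα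
    obtain ⟨Sj, ⟨j, rfl⟩, hj⟩ := HahnSeries.SummableFamily.support_hsum_subset hα
    have h2 : (0:ℚ) < ((p:ℚ) ^ j) * m := mul_pos (pow_pos (p_cast_pos p) j) hm0
    linarith [hsupp j α hj]
  refine ⟨s.hsum, hGpsupp, ?_⟩
  ext β
  have hfin : ∀ γ : ℚ, (Function.support fun j => (Fp ^ (p ^ j)).coeff γ).Finite := by
    intro γ
    exact (hco γ).subset (fun j hj => ⟨γ, hj, le_refl γ⟩)
  have hpow : (s.hsum ^ p).coeff β = ∑ᶠ j : ℕ, (Fp ^ (p ^ (j + 1))).coeff β := by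
    rw [coeff_pow_p, HahnSeries.SummableFamily.coeff_hsum]
    have hmap := (frobenius K p).toAddMonoidHom.map_finsum
      (f := fun j => (Fp ^ (p ^ j)).coeff (β / p)) (hfin (β / p))
    simp only [RingHom.toAddMonoidHom_eq_coe, AddMonoidHom.coe_coe, frobenius_def] at hmap
    simp only [hs_apply]
    rw [hmap]
    apply finsum_congr
    intro j
    rw [← coeff_pow_p, ← pow_mul, ← pow_succ]
  rw [coeff_sub, coeff_neg, hpow, HahnSeries.SummableFamily.coeff_hsum]
  have := finsum_succ (fun j => (Fp ^ (p ^ j)).coeff β) (hfin β)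
  simp only [pow_zero, pow_one] at this
  simp only [hs_apply]
  linear_combination this


lemma mem_support_root_iter {x : HahnSeries ℚ K} {k : ℕ} {a : ℚ}
    (ha : a ∈ ((root p)^[k] x).support) : ((p:ℚ) ^ k) * a ∈ x.support := by
  induction k generalizing a with
  | zero => simpa using ha
  | succ k ih =>
    rw [Function.iterate_succ_apply'] at ha
    have h1 := ih (mem_support_root ha)
    have h2 : ((p:ℚ) ^ (k+1)) * a = ((p:ℚ) ^ k) * ((p:ℚ) * a) := by ring
    rw [h2]; exact h1

lemma root_iter_pow (x : HahnSeries ℚ K) (k : ℕ) :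
    ((root p)^[k + 1] x) ^ p = (root p)^[k] x := by
  rw [Function.iterate_succ_apply']; exact root_pow _

lemma exists_Gm (Fm : HahnSeries ℚ K) (hFm : ∀ α ∈ Fm.support, α < 0) :
    ∃ Gm : HahnSeries ℚ K, (∀ α ∈ Gm.support, α < 0) ∧ Gm ^ p - Gm = -Fm := by
  by_cases h0 : Fm = 0
  · refine ⟨0, by simp, by rw [h0]; simp [zero_pow (p_pos p).ne']⟩
  have hne : Fm.support.Nonempty := support_nonempty_iff.2 h0
  set m := Fm.isWF_support.min hne with hm
  have hle : ∀ a ∈ Fm.support, m ≤ a := fun a ha => Fm.isWF_support.min_le hne ha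
  have hiter : ∀ k : ℕ, ∀ γ ∈ ((root p)^[k] Fm).support,
      m ≤ ((p:ℚ) ^ k) * γ ∧ ((p:ℚ) ^ k) * γ < 0 := by
    intro k γ hγ
    have h1 := mem_support_root_iter hγ
    exact ⟨hle _ h1, hFm _ h1⟩
  have hneg : ∀ k : ℕ, ∀ γ ∈ ((root p)^[k] Fm).support, γ < 0 := by
    intro k γ hγ
    have h2 := (hiter k γ hγ).2
    by_contra hc
    push_neg at hc
    have : (0:ℚ) ≤ ((p:ℚ) ^ k) * γ := mul_nonneg (pow_pos (p_cast_pos p) k).le hc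
    linarith
  have hbound : ∀ k : ℕ, ∀ γ ∈ ((root p)^[k] Fm).support, (k:ℚ) < m / γ := by
    intro k γ hγ
    have h1 := (hiter k γ hγ).1
    have hγ0 := hneg k γ hγ
    have h2 : ((p:ℚ) ^ k) ≤ m / γ := (le_div_iff_of_neg hγ0).2 (by linarith [h1])
    have h3 : (k : ℚ) < (p:ℚ) ^ k := by
      exact_mod_cast cast_lt_pow (Fact.out : p.Prime).two_le k
    linarith
  have hco : ∀ x : ℚ, x < 0 → {j : ℕ | ∃ q ∈ ((root p)^[j + 1] Fm).support, q ≤ x}.Finite := by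
    intro x hx
    apply (finite_cast_lt (m / x)).subset
    intro j hj
    obtain ⟨q, hq, hqx⟩ := hj
    have h1 := (hiter (j+1) q hq).1
    have hq0 := hneg (j+1) q hq
    -- m ≤ p^(j+1) * q ≤ p^(j+1) * x  (mult ineq by pos, q ≤ x)
    have h2 : ((p:ℚ) ^ (j+1)) * q ≤ ((p:ℚ) ^ (j+1)) * x :=
      mul_le_mul_of_nonneg_left hqx (pow_pos (p_cast_pos p) (j+1)).le
    have h3 : ((p:ℚ) ^ (j+1)) ≤ m / x := (le_div_iff_of_neg hx).2 (by linarith)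
    have h4 : (j : ℚ) < (p:ℚ) ^ (j+1) := by
      have := cast_lt_pow (Fact.out : p.Prime).two_le j
      have h5 : ((p:ℚ)) ^ j ≤ ((p:ℚ)) ^ (j+1) := by
        apply pow_le_pow_right₀ ?_ (Nat.le_succ j)
        exact_mod_cast (Fact.out : p.Prime).one_lt.le
      exact lt_of_lt_of_le (by exact_mod_cast this) h5
    exact lt_of_lt_of_le h4 h3
  set t : HahnSeries.SummableFamily ℚ K ℕ :=
    { toFun := fun j => (root p)^[j + 1] Fm
      isPWO_iUnion_support' := by
        rw [Set.isPWO_iff_isWF]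
        refine isWF_iUnion_aux (fun j => ((root p)^[j+1] Fm).isPWO_support.isWF) ?_
        rintro x ⟨j, hj⟩
        exact hco x (hneg (j+1) x hj)
      finite_co_support' := by
        intro g
        by_cases hg : ∃ j : ℕ, g ∈ ((root p)^[j + 1] Fm).support
        · obtain ⟨j0, hj0⟩ := hg
          exact (hco g (hneg (j0+1) g hj0)).subset (fun j hj => ⟨g, hj, le_refl g⟩)
        · push_neg at hg
          convert Set.finite_empty
          rw [Set.eq_empty_iff_forall_notMem]
          intro j hj
          exact hg j hj } with ht
  have ht_apply : ∀ j, t j = (root p)^[j + 1] Fm := fun j => rfl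
  have hGmsupp : ∀ α ∈ (-t.hsum).support, α < 0 := by
    intro α hα
    rw [support_neg] at hα
    obtain ⟨Sj, ⟨j, rfl⟩, hj⟩ := HahnSeries.SummableFamily.support_hsum_subset hα
    exact hneg (j+1) α hj
  refine ⟨-t.hsum, hGmsupp, ?_⟩
  have hX : t.hsum ^ p = Fm + t.hsum := by
    ext β
    have hfinw : (Function.support fun j : ℕ => ((root p)^[j] Fm).coeff β).Finite := by
      by_cases hβ : β < 0
      · apply (finite_cast_lt (m / β)).subset
        intro j hj
        exact hbound j β hj
      · convert Set.finite_empty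
        rw [Set.eq_empty_iff_forall_notMem]
        intro j hj
        exact hβ (hneg j β hj)
    have hfin2 : (Function.support fun j : ℕ => (t j).coeff (β / p)).Finite :=
      t.finite_co_support (β / p)
    rw [coeff_pow_p, coeff_add, HahnSeries.SummableFamily.coeff_hsum,
      HahnSeries.SummableFamily.coeff_hsum]
    have hmap := (frobenius K p).toAddMonoidHom.map_finsum
      (f := fun j => (t j).coeff (β / p)) hfin2
    simp only [RingHom.toAddMonoidHom_eq_coe, AddMonoidHom.coe_coe, frobenius_def] at hmap
    rw [hmap]
    have hterm : ∀ j : ℕ, ((t j).coeff (β / p)) ^ p = ((root p)^[j] Fm).coeff β := by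
      intro j
      rw [← coeff_pow_p, ht_apply, root_iter_pow]
    rw [finsum_congr hterm]
    have := finsum_succ (fun j => ((root p)^[j] Fm).coeff β) hfinw
    simp only [Function.iterate_zero_apply] at this
    rw [← this]
    rfl
  have hnegpow : (-t.hsum) ^ p = -(t.hsum ^ p) := by
    rw [← frobenius_def, map_neg, frobenius_def]
  rw [hnegpow, hX]
  ring


lemma eq_C_of (H : HahnSeries ℚ K) (k : K) (hH : H ^ p - H = HahnSeries.C k) :
    H = HahnSeries.C (H.coeff 0) ∧ (H.coeff 0) ^ p - H.coeff 0 = k := by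
  have hrel : ∀ β : ℚ, H.coeff (β / p) ^ p - H.coeff β = (HahnSeries.C k).coeff β := by
    intro β
    have h := congrArg (fun w => HahnSeries.coeff w β) hH
    simpa [coeff_sub, coeff_pow_p] using h
  have hmul : ∀ β : ℚ, β ≠ 0 → H.coeff ((p:ℚ) * β) = (H.coeff β) ^ p := by
    intro β hβ
    have h := hrel ((p:ℚ) * β)
    have h0 : (p:ℚ) * β ≠ 0 := mul_ne_zero (p_cast_pos p).ne' hβ
    rw [HahnSeries.C_apply, coeff_single_of_ne h0] at h
    have h1 : (p:ℚ) * β / p = β := mul_div_cancel_left₀ β (p_cast_pos p).ne'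
    rw [h1] at h
    linear_combination -h
  have hdiv : ∀ β : ℚ, β ≠ 0 → H.coeff β ≠ 0 → H.coeff (β / p) ≠ 0 := by
    intro β hβ hne hc
    have h := hrel β
    rw [HahnSeries.C_apply, coeff_single_of_ne hβ, hc] at h
    apply hne
    have hzp : (0:K) ^ p = 0 := zero_pow (p_pos p).ne'
    linear_combination -h + hzp
  have hsupp : ∀ β ∈ H.support, β = 0 := by
    intro β hβm
    by_contra hβ0
    rcases lt_or_gt_of_ne hβ0 with hlt | hgt
    · -- β < 0 : consider g k = p^k * β strictly decreasing
      set g : ℕ → ℚ := fun k => ((p:ℚ) ^ k) * β with hg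
      have hgneg : ∀ k, g k < 0 := fun k =>
        mul_neg_of_pos_of_neg (pow_pos (p_cast_pos p) k) hlt
      have hmem : ∀ k, g k ∈ H.support := by
        intro k
        induction k with
        | zero => simpa [hg] using hβm
        | succ k ih =>
          have hne' : g k ≠ 0 := (hgneg k).ne
          have h := hmul (g k) hne'
          have h2 : (p:ℚ) * g k = g (k + 1) := by rw [hg]; ring
          rw [h2] at h
          simp only [mem_support, ne_eq] at ih ⊢
          rw [h]
          exact pow_ne_zero p ih
      have hanti : StrictAnti g := by
        apply strictAnti_nat_of_succ_lt
        intro k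
        have h2 : g (k + 1) = (p:ℚ) * g k := by rw [hg]; ring
        rw [h2]
        nlinarith [hgneg k, p_cast_pos p, (by exact_mod_cast (Fact.out : p.Prime).one_lt : (1:ℚ) < p)]
      have := Set.isWF_iff_no_descending_seq.1 H.isWF_support g hanti
      exact this hmem
    · -- β > 0 : consider g k = β / p^k strictly decreasing
      set g : ℕ → ℚ := fun k => β / ((p:ℚ) ^ k) with hg
      have hgpos : ∀ k, 0 < g k := fun k => div_pos hgt (pow_pos (p_cast_pos p) k)
      have hmem : ∀ k, g k ∈ H.support := by
        intro k
        induction k with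
        | zero => simpa [hg] using hβm
        | succ k ih =>
          have h2 : g (k + 1) = g k / p := by
            rw [hg]; field_simp; ring
          simp only [mem_support, ne_eq] at ih ⊢
          rw [h2]
          exact hdiv (g k) (hgpos k).ne' ih
      have hanti : StrictAnti g := by
        apply strictAnti_nat_of_succ_lt
        intro k
        have h2 : g (k + 1) = g k / p := by rw [hg]; field_simp; ring
        rw [h2]
        have h3 : (1:ℚ) < p := by exact_mod_cast (Fact.out : p.Prime).one_lt
        exact div_lt_self (hgpos k) h3
      have := Set.isWF_iff_no_descending_seq.1 H.isWF_support g hanti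
      exact this hmem
  have hHC : H = HahnSeries.C (H.coeff 0) := by
    ext a
    by_cases ha : a = 0
    · subst ha; simp [HahnSeries.C_apply, coeff_single_same]
    · rw [HahnSeries.C_apply, coeff_single_of_ne ha]
      by_contra hc
      exact ha (hsupp a hc)
  refine ⟨hHC, ?_⟩
  have h := hrel 0
  rw [HahnSeries.C_apply, coeff_single_same, zero_div] at h
  exact h

lemma decomp_unique (F : HahnSeries ℚ K) :
    ∃! d : HahnSeries ℚ K × K × HahnSeries ℚ K,
      (∀ α ∈ d.1.support, α < 0) ∧ (∀ α ∈ d.2.2.support, 0 < α) ∧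
        F = d.1 + HahnSeries.C d.2.1 + d.2.2 := by
  refine ⟨(cut F {a | a < 0}, F.coeff 0, cut F {a | 0 < a}), ⟨?_, ?_, ?_⟩, ?_⟩
  · intro α hα
    simp only [mem_support, cut_coeff, Set.mem_setOf_eq, ne_eq] at hα
    by_contra h
    simp [h] at hα
  · intro α hα
    simp only [mem_support, cut_coeff, Set.mem_setOf_eq, ne_eq] at hα
    by_contra h
    simp [h] at hα
  · ext a
    rw [coeff_add, coeff_add]
    simp only [cut_coeff, Set.mem_setOf_eq, HahnSeries.C_apply, coeff_single]
    rcases lt_trichotomy a 0 with h | h | h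
    · simp [h, h.ne, not_lt.2 h.le]
    · subst h; simp
    · simp [h, h.ne', not_lt.2 h.le]
  · rintro ⟨ym, yc, yp⟩ ⟨hym, hyp, heq⟩
    have hcoeff : ∀ a, F.coeff a = ym.coeff a + (HahnSeries.C yc).coeff a + yp.coeff a := by
      intro a
      rw [heq, coeff_add, coeff_add]
    have hym0 : ∀ a : ℚ, ¬a < 0 → ym.coeff a = 0 := by
      intro a h
      by_contra hc
      exact h (hym a hc)
    have hyp0 : ∀ a : ℚ, ¬0 < a → yp.coeff a = 0 := by
      intro a h
      by_contra hc
      exact h (hyp a hc)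
    refine Prod.ext ?_ (Prod.ext ?_ ?_)
    · ext a
      simp only [cut_coeff, Set.mem_setOf_eq]
      by_cases h : a < 0
      · rw [if_pos h, hcoeff a, HahnSeries.C_apply, coeff_single_of_ne h.ne, hyp0 a (not_lt.2 h.le)]
        ring
      · rw [if_neg h, hym0 a h]
    · show yc = F.coeff 0
      rw [hcoeff 0, HahnSeries.C_apply, coeff_single_same, hym0 0 (lt_irrefl 0), hyp0 0 (lt_irrefl 0)]
      ring
    · show yp = cut F {a | 0 < a}
      ext a
      simp only [cut_coeff, Set.mem_setOf_eq]
      by_cases h : 0 < a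
      · rw [if_pos h, hcoeff a, HahnSeries.C_apply, coeff_single_of_ne h.ne', hym0 a (not_lt.2 h.le)]
        ring
      · rw [if_neg h, hyp0 a h]

end
end Stmt18

theorem stmt18 (p : ℕ) [Fact p.Prime]
    (F : HahnSeries ℚ (AlgebraicClosure (ZMod p))) :
    (∃! d : HahnSeries ℚ (AlgebraicClosure (ZMod p)) × AlgebraicClosure (ZMod p) ×
        HahnSeries ℚ (AlgebraicClosure (ZMod p)),
      (∀ α ∈ d.1.support, α < 0) ∧ (∀ α ∈ d.2.2.support, 0 < α) ∧
        F = d.1 + HahnSeries.C d.2.1 + d.2.2) ∧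
    ∀ (Fm Fp : HahnSeries ℚ (AlgebraicClosure (ZMod p))) (c : AlgebraicClosure (ZMod p)),
      (∀ α ∈ Fm.support, α < 0) → (∀ α ∈ Fp.support, 0 < α) →
      F = Fm + HahnSeries.C c + Fp →
      ∃ Gp Gm : HahnSeries ℚ (AlgebraicClosure (ZMod p)),
        (∀ α ∈ Gp.support, 0 < α) ∧ Gp ^ p - Gp = -Fp ∧
        (∀ α ∈ Gm.support, α < 0) ∧ Gm ^ p - Gm = -Fm ∧
        ∀ G : HahnSeries ℚ (AlgebraicClosure (ZMod p)),
          G ^ p - G = -F ↔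
            ∃ (a : AlgebraicClosure (ZMod p)) (i : ZMod p),
              a ^ p - a = -c ∧
              G = Gp + Gm +
                HahnSeries.C (a + algebraMap (ZMod p) (AlgebraicClosure (ZMod p)) i) := by
  set K := AlgebraicClosure (ZMod p)
  constructor
  · exact Stmt18.decomp_unique F
  · intro Fm Fp c hFm hFp hF
    obtain ⟨Gp, hGpsupp, hGpeq⟩ := Stmt18.exists_Gp (p := p) Fp hFp
    obtain ⟨Gm, hGmsupp, hGmeq⟩ := Stmt18.exists_Gm (p := p) Fm hFm
    refine ⟨Gp, Gm, hGpsupp, hGpeq, hGmsupp, hGmeq, ?_⟩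
    intro G
    constructor
    · intro hG
      set H := G - Gp - Gm with hH
      have hHeq : H ^ p - H = HahnSeries.C (-c) := by
        rw [map_neg, hH, sub_pow_char, sub_pow_char]
        linear_combination hG - hGpeq - hGmeq - hF
      obtain ⟨h1, h2⟩ := Stmt18.eq_C_of H (-c) hHeq
      set a0 := H.coeff 0 with ha0
      refine ⟨a0, 0, h2, ?_⟩
      rw [map_zero, add_zero]
      have hG' : G = Gp + Gm + H := by rw [hH]; ring
      rw [hG', h1]
    · rintro ⟨a, i, ha, rfl⟩
      have hpow : (algebraMap (ZMod p) K i) ^ p = algebraMap (ZMod p) K i := by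
        rw [← map_pow, ZMod.pow_card]
      have hb : (a + algebraMap (ZMod p) K i) ^ p - (a + algebraMap (ZMod p) K i) = -c := by
        rw [add_pow_char, hpow]
        linear_combination ha
      have hCb : (HahnSeries.C (a + algebraMap (ZMod p) K i) : HahnSeries ℚ K) ^ p -
          HahnSeries.C (a + algebraMap (ZMod p) K i) = -HahnSeries.C c := by
        rw [← map_pow, ← map_sub, hb, map_neg]
      rw [add_pow_char, add_pow_char]
      linear_combination hGpeq + hGmeq + hCb + hF
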